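/- arXiv:1005.2781 — 5 statements merged into one kernel-verified Lean document; each statement's English description precedes it below -/
import Mathlib

section
/- Let X_1, X_2, ... be an i.i.d. sequence of real-valued random variables with common distribution function F, and let F_n denote the empirical distribution function of the first n observations. Fix p ∈ (0,1). If the left quantile and right quantile of F at p coincide, i.e. lq_F(p) = rq_F(p), then the left sample quantile converges almost surely: lq_{F_n}(p) → lq_F(p) almost surely as n → ∞. -/
open MeasureTheory ProbabilityTheory Filter

/-- Left quantile of a distribution function `F` at level `p`:
`lq F p = inf {x | F x ≥ p}`. -/
noncomputable def lq (F : ℝ → ℝ) (p : ℝ) : ℝ := sInf {x : ℝ | p ≤ F x}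

/-- Right quantile of a distribution function `F` at level `p`:
`rq F p = inf {x | F x > p}`. -/
noncomputable def rq (F : ℝ → ℝ) (p : ℝ) : ℝ := sInf {x : ℝ | p < F x}

/-- Empirical distribution function of the first `n` observations `X 0, ..., X (n-1)`:
`edf X n ω x = (1/n) * #{i < n | X i ω ≤ x}`. -/
noncomputable def edf {Ω : Type*} (X : ℕ → Ω → ℝ) (n : ℕ) (ω : Ω) (x : ℝ) : ℝ :=
  ((Finset.range n).filter (fun i => X i ω ≤ x)).card / n

lemma edf_mono {Ω : Type*} (X : ℕ → Ω → ℝ) (n : ℕ) (ω : Ω) :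
    Monotone (edf X n ω) := by
  intro x y hxy
  unfold edf
  rcases Nat.eq_zero_or_pos n with h | h
  · simp [h]
  · apply div_le_div_of_nonneg_right ?_ (by positivity)
    exact_mod_cast Finset.card_le_card
      (Finset.monotone_filter_right _ (fun i _ hi => le_trans hi hxy))

/-- Sandwich lemma for left quantiles of a monotone function. -/
lemma lq_sandwich {G : ℝ → ℝ} (hG : Monotone G) {a b p : ℝ}
    (ha : G a < p) (hb : p ≤ G b) : a ≤ lq G p ∧ lq G p ≤ b := by
  have hlb : ∀ x ∈ {x : ℝ | p ≤ G x}, a ≤ x := by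
    intro x hx
    by_contra h
    push_neg at h
    exact absurd (le_trans hx (hG h.le)) (not_le.2 ha)
  exact ⟨le_csInf ⟨b, hb⟩ hlb, csInf_le ⟨a, hlb⟩ hb⟩

/-- SLLN for the empirical distribution function at a fixed point. -/
lemma edf_tendsto {Ω : Type*} [MeasurableSpace Ω] (μ : Measure Ω) [IsProbabilityMeasure μ]
    (X : ℕ → Ω → ℝ) (hmeas : ∀ i, Measurable (X i))
    (hindep : iIndepFun (m := fun _ => Real.measurableSpace) X μ)
    (hident : ∀ i, IdentDistrib (X i) (X 0) μ μ) (x : ℝ) :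
    ∀ᵐ ω ∂μ, Tendsto (fun n => edf X n ω x) atTop
      (nhds ((μ {ω | X 0 ω ≤ x}).toReal)) := by
  classical
  set g : ℝ → ℝ := fun t => if t ≤ x then (1 : ℝ) else 0 with hg
  have hgmeas : Measurable g :=
    Measurable.ite measurableSet_Iic measurable_const measurable_const
  set Y : ℕ → Ω → ℝ := fun i ω => g (X i ω) with hY
  have hYind : (fun ω => g (X 0 ω))
      = Set.indicator (X 0 ⁻¹' Set.Iic x) (fun _ => (1:ℝ)) := by
    ext ω
    simp only [Set.indicator_apply, Set.mem_preimage, Set.mem_Iic, hg]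
  have hint : Integrable (Y 0) μ := by
    show Integrable (fun ω => g (X 0 ω)) μ
    rw [hYind]
    exact (integrable_indicator_iff ((hmeas 0) measurableSet_Iic)).2
      (integrableOn_const (measure_ne_top _ _))
  have hYindep : Pairwise (Function.onFun (IndepFun · · μ) Y) := by
    intro i j hij
    exact (hindep.comp (fun _ => g) (fun _ => hgmeas)).indepFun hij
  have hYident : ∀ i, IdentDistrib (Y i) (Y 0) μ μ :=
    fun i => (hident i).comp hgmeas
  have hmean : μ[Y 0] = (μ {ω | X 0 ω ≤ x}).toReal := by
    show ∫ ω, g (X 0 ω) ∂μ = _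
    rw [hYind, integral_indicator ((hmeas 0) measurableSet_Iic)]
    simp only [integral_const, measureReal_def, MeasureTheory.Measure.restrict_apply_univ, smul_eq_mul, mul_one]
    rfl
  have hslln := strong_law_ae_real Y hint hYindep hYident
  rw [hmean] at hslln
  filter_upwards [hslln] with ω hω
  convert hω using 2 with n
  unfold edf
  congr 1
  rw [Finset.card_filter]
  push_cast
  rfl

/-- If the left and right quantiles of `F` at `p` coincide, then the left sample
quantile converges almost surely to `lq F p`. -/
theorem left_sample_quantile_tendsto
    {Ω : Type*} [MeasurableSpace Ω] (μ : Measure Ω) [IsProbabilityMeasure μ]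
    (X : ℕ → Ω → ℝ) (hmeas : ∀ i, Measurable (X i))
    (hindep : iIndepFun (m := fun _ => Real.measurableSpace) X μ)
    (hident : ∀ i, IdentDistrib (X i) (X 0) μ μ)
    (F : ℝ → ℝ) (hF : ∀ x, F x = (μ {ω | X 0 ω ≤ x}).toReal)
    (p : ℝ) (hp : p ∈ Set.Ioo (0 : ℝ) 1)
    (heq : lq F p = rq F p) :
    ∀ᵐ ω ∂μ, Tendsto (fun n => lq (edf X n ω) p) atTop (nhds (lq F p)) := by
  obtain ⟨hp0, hp1⟩ := hp
  set ν := Measure.map (X 0) μ with hν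
  have : IsProbabilityMeasure ν := Measure.isProbabilityMeasure_map (hmeas 0).aemeasurable
  have hFcdf : ∀ x, F x = cdf ν x := by
    intro x
    rw [hF x, cdf_eq_real, measureReal_def, hν, Measure.map_apply (hmeas 0) measurableSet_Iic]
    rfl
  have hFmono : Monotone F := by
    intro x y hxy
    rw [hFcdf x, hFcdf y]
    exact (cdf ν).mono hxy
  -- F goes above p eventually at +∞
  obtain ⟨b, hb⟩ : ∃ b, p < F b := by
    obtain ⟨b, hb⟩ := ((tendsto_cdf_atTop ν).eventually_const_lt hp1).exists
    exact ⟨b, by rw [hFcdf b]; exact hb⟩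
  -- F stays below p near -∞
  obtain ⟨a0, ha0⟩ : ∃ a0, ∀ x ≤ a0, F x < p := by
    have := (tendsto_cdf_atBot ν).eventually_lt_const hp0
    obtain ⟨a0, ha0⟩ := eventually_atBot.1 this
    exact ⟨a0, fun x hx => by rw [hFcdf x]; exact ha0 x hx⟩
  set q := lq F p with hq
  have hbddS : a0 ≤ q := by
    show a0 ≤ sInf {x : ℝ | p ≤ F x}
    refine le_csInf ⟨b, hb.le⟩ fun x hx => ?_
    by_contra h
    push_neg at h
    exact absurd hx (not_le.2 (ha0 x h.le))
  have hlow : ∀ δ : ℝ, 0 < δ → F (q - δ) < p := by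
    intro δ hδ
    by_contra h
    push_neg at h
    have : q ≤ q - δ := by
      show sInf {x : ℝ | p ≤ F x} ≤ q - δ
      refine csInf_le ⟨a0 - δ, fun x (hx : p ≤ F x) => ?_⟩ h
      by_contra hc
      push_neg at hc
      exact absurd hx (not_le.2 (ha0 x (by linarith)))
    linarith
  have hhigh : ∀ δ : ℝ, 0 < δ → p < F (q + δ) := by
    intro δ hδ
    have hTne : Set.Nonempty {x : ℝ | p < F x} := ⟨b, hb⟩
    have hlt : sInf {x : ℝ | p < F x} < q + δ := by
      have : rq F p < q + δ := by rw [← heq]; linarith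
      exact this
    obtain ⟨x, hx, hxlt⟩ := exists_lt_of_csInf_lt hTne hlt
    exact lt_of_lt_of_le hx (hFmono hxlt.le)
  -- apply SLLN at the points q ± 1/(k+1)
  have hae : ∀ᵐ ω ∂μ, ∀ k : ℕ,
      Tendsto (fun n => edf X n ω (q - 1/(k+1))) atTop (nhds (F (q - 1/(k+1)))) ∧
      Tendsto (fun n => edf X n ω (q + 1/(k+1))) atTop (nhds (F (q + 1/(k+1)))) := by
    rw [ae_all_iff]
    intro k
    have h1 := edf_tendsto μ X hmeas hindep hident (q - 1/(k+1))
    have h2 := edf_tendsto μ X hmeas hindep hident (q + 1/(k+1))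
    rw [← hF] at h1 h2
    filter_upwards [h1, h2] with ω hω1 hω2
    exact ⟨hω1, hω2⟩
  filter_upwards [hae] with ω hω
  rw [Metric.tendsto_atTop]
  intro ε hε
  obtain ⟨k, hk⟩ := exists_nat_one_div_lt hε
  set δ : ℝ := 1 / (k + 1) with hδdef
  have hδ : 0 < δ := by positivity
  obtain ⟨hω1, hω2⟩ := hω k
  have hev1 : ∀ᶠ n in atTop, edf X n ω (q - δ) < p :=
    hω1.eventually_lt_const (hlow δ hδ)
  have hev2 : ∀ᶠ n in atTop, p < edf X n ω (q + δ) :=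
    hω2.eventually_const_lt (hhigh δ hδ)
  obtain ⟨N, hN⟩ := eventually_atTop.1 (hev1.and hev2)
  refine ⟨N, fun n hn => ?_⟩
  obtain ⟨h1, h2⟩ := hN n hn
  obtain ⟨hl, hr⟩ := lq_sandwich (edf_mono X n ω) h1 h2.le
  rw [Real.dist_eq]
  have : |lq (edf X n ω) p - q| ≤ δ := abs_le.2 ⟨by linarith, by linarith⟩
  calc |lq (edf X n ω) p - q| ≤ δ := this
    _ < ε := hk
end

section
/- Let X_1, X_2, ... be an i.i.d. sequence of real-valued random variables with common distribution function F, and let F_n denote the empirical distribution function of the first n observations. Fix p ∈ (0,1). If lq_F(p) < rq_F(p), then with probability 1 the sequence of right sample quantiles (rq_{F_n}(p))_{n≥1} does not converge (it diverges almost surely). -/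
open MeasureTheory ProbabilityTheory Filter

open scoped ENNReal NNReal

lemma freq_gt_of_not_bddAbove {g : ℕ → ℝ} (h : ¬ BddAbove (Set.range g)) (c : ℝ) :
    ∃ᶠ n in atTop, c < g n := by
  rw [Filter.frequently_atTop]
  intro N
  by_contra hcon
  push_neg at hcon
  apply h
  have hb : BddAbove (g '' Set.Iic N ∪ Set.Iic c) :=
    ((Set.finite_Iic N).image g).bddAbove.union bddAbove_Iic
  refine BddAbove.mono ?_ hb
  rintro _ ⟨n, rfl⟩
  rcases le_or_gt n N with hn | hn
  · exact Or.inl ⟨n, hn, rfl⟩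
  · exact Or.inr (hcon n hn.le)

lemma walk_osc {Ω : Type*} [MeasurableSpace Ω] (μ : Measure Ω) [IsProbabilityMeasure μ]
    (X : ℕ → Ω → ℝ) (hmeas : ∀ i, Measurable (X i))
    (hindep : iIndepFun (m := fun _ => Real.measurableSpace) X μ)
    (p x : ℝ) (hp : p ∈ Set.Ioo (0:ℝ) 1)
    (hpx : ∀ i, (μ {ω | X i ω ≤ x}).toReal = p) :
    ∀ᵐ ω ∂μ,
      (∃ᶠ n : ℕ in atTop,
        (n:ℝ) * p < (((Finset.range n).filter (fun i => X i ω ≤ x)).card : ℝ)) ∧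
      (∃ᶠ n : ℕ in atTop,
        (((Finset.range n).filter (fun i => X i ω ≤ x)).card : ℝ) < (n:ℝ) * p) := by
  classical
  set φ : ℝ → ℝ := (Set.Iic x).indicator (fun _ => 1) with hφdef
  have hφ : Measurable φ := measurable_const.indicator measurableSet_Iic
  set Y : ℕ → Ω → ℝ := fun i ω => φ (X i ω) with hYdef
  have hYmeas : ∀ i, Measurable (Y i) := fun i => hφ.comp (hmeas i)
  have hYsm : ∀ i, StronglyMeasurable (Y i) := fun i => (hYmeas i).stronglyMeasurable
  have hYind : iIndepFun (m := fun _ => Real.measurableSpace) Y μ :=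
    hindep.comp (fun _ => φ) (fun _ => hφ)
  have hYval : ∀ i ω, Y i ω = if X i ω ≤ x then 1 else 0 := by
    intro i ω
    by_cases h : X i ω ≤ x <;>
      simp [hYdef, hφdef, Set.indicator_apply, Set.mem_Iic, h]
  have hY01 : ∀ i ω, Y i ω = 0 ∨ Y i ω = 1 := by
    intro i ω
    rw [hYval]
    by_cases h : X i ω ≤ x <;> simp [h]
  have hYrep : ∀ i, Y i = Set.indicator {ω | X i ω ≤ x} (fun _ => (1:ℝ)) := by
    intro i
    funext ω
    rw [hYval, Set.indicator_apply]
    simp [Set.mem_setOf_eq]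
  have hsetmeas : ∀ i, MeasurableSet {ω | X i ω ≤ x} := fun i =>
    (hmeas i) measurableSet_Iic
  have hYint : ∀ i, Integrable (Y i) μ := by
    intro i
    rw [hYrep i]
    exact (integrable_const (1:ℝ)).indicator (hsetmeas i)
  have hYinteg : ∀ i, ∫ ω, Y i ω ∂μ = p := by
    intro i
    rw [hYrep i, integral_indicator_const _ (hsetmeas i)]
    simp [hpx i]; exact hpx i
  set ℱ := MeasureTheory.Filtration.natural Y hYsm with hℱdef
  set M : ℕ → Ω → ℝ := fun n ω => ∑ k ∈ Finset.range n, (Y (k+1) ω - p) with hMdef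
  have hadp : StronglyAdapted ℱ M := by
    intro n
    refine Finset.stronglyMeasurable_fun_sum _ fun k hk => ?_
    exact ((MeasureTheory.Filtration.stronglyAdapted_natural hYsm (k+1)).mono
      (ℱ.mono (Nat.succ_le_of_lt (Finset.mem_range.mp hk)))).sub stronglyMeasurable_const
  have hint : ∀ n, Integrable (M n) μ := fun n =>
    integrable_finset_sum _ fun k _ => (hYint (k+1)).sub (integrable_const p)
  have hmart : Martingale M ℱ μ := by
    refine martingale_nat hadp hint fun n => ?_
    have h1 : M (n+1) = M n + fun ω => (Y (n+1) ω - p) := by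
      funext ω
      simp [hMdef, Finset.sum_range_succ]
      ring
    have hgint : Integrable (fun ω => Y (n+1) ω - p) μ :=
      (hYint (n+1)).sub (integrable_const p)
    have h2 := condExp_add (μ := μ) (m := ℱ n) (hint n) hgint
    have h3 : μ[M n | ℱ n] = M n :=
      condExp_of_stronglyMeasurable (ℱ.le n) (hadp n) (hint n)
    have h4 : μ[fun ω => Y (n+1) ω - p | ℱ n] =ᵐ[μ] fun _ => 0 := by
      have hsub := condExp_sub (μ := μ) (m := ℱ n) (hYint (n+1)) (integrable_const p)
      have hY : μ[Y (n+1) | ℱ n] =ᵐ[μ] fun _ => ∫ x, Y (n+1) x ∂μ := hYind.condExp_natural_ae_eq_of_lt hYsm (Nat.lt_succ_self n)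
      have hconst : μ[(fun _ => p : Ω → ℝ) | ℱ n] = fun _ => p :=
        condExp_const (ℱ.le n) p
      refine hsub.trans ?_
      rw [hconst]
      filter_upwards [hY] with ω hω
      simp [hω, hYinteg (n+1)]
    rw [h1]
    refine EventuallyEq.symm (h2.trans ?_)
    rw [h3]
    filter_upwards [h4] with ω hω
    simp [hω]
  have hdiff : ∀ n ω, M (n+1) ω - M n ω = Y (n+1) ω - p := by
    intro n ω
    simp [hMdef, Finset.sum_range_succ]
    ring
  set δ : ℝ := min p (1 - p) with hδdef
  have hδ : 0 < δ := lt_min hp.1 (by linarith [hp.2])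
  have hnc : ∀ ω, ¬ ∃ c, Tendsto (fun n => M n ω) atTop (nhds c) := by
    rintro ω ⟨c, hc⟩
    have h1 : Tendsto (fun n => M (n+1) ω - M n ω) atTop (nhds 0) := by
      have := (hc.comp (tendsto_add_atTop_nat 1)).sub hc
      simpa using this
    have h2 : ∀ n, δ ≤ |M (n+1) ω - M n ω| := by
      intro n
      rw [hdiff]
      rcases hY01 (n+1) ω with h | h <;> rw [h]
      · rw [abs_of_nonpos (by linarith [hp.1])]
        simp only [hδdef]
        have := min_le_left p (1-p); linarith
      · rw [abs_of_nonneg (by linarith [hp.2])]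
        have := min_le_right p (1-p); linarith
    have h3 : ∀ᶠ n in atTop, |M (n+1) ω - M n ω| < δ := by
      have habs : Tendsto (fun n => |M (n+1) ω - M n ω|) atTop (nhds 0) := by
        simpa using h1.abs
      exact habs.eventually_lt_const hδ
    obtain ⟨n, hn⟩ := (h3.and (Eventually.of_forall h2)).exists
    exact absurd (lt_of_le_of_lt hn.2 hn.1) (lt_irrefl _)
  have hbdd : ∀ᵐ ω ∂μ, ∀ i, |M (i+1) ω - M i ω| ≤ ((1:NNReal) : ℝ) := by
    refine Eventually.of_forall fun ω i => ?_
    rw [hdiff]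
    rcases hY01 (i+1) ω with h | h <;> rw [h]
    · rw [abs_of_nonpos (by linarith [hp.1])]; simp; linarith [hp.2]
    · rw [abs_of_nonneg (by linarith [hp.2])]; simp; linarith [hp.1]
  have hbdd' : ∀ᵐ ω ∂μ, ∀ i, |(-M) (i+1) ω - (-M) i ω| ≤ ((1:NNReal) : ℝ) := by
    filter_upwards [hbdd] with ω hω i
    have he : (-M) (i+1) ω - (-M) i ω = -(M (i+1) ω - M i ω) := by
      simp [Pi.neg_apply]; ring
    rw [he, abs_neg]; exact hω i
  have hup := hmart.submartingale.bddAbove_iff_exists_tendsto hbdd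
  have hdown := hmart.neg.submartingale.bddAbove_iff_exists_tendsto hbdd'
  filter_upwards [hup, hdown] with ω hω1 hω2
  have hA : ¬ BddAbove (Set.range fun n => M n ω) := fun hb => hnc ω (hω1.mp hb)
  have hB : ¬ BddAbove (Set.range fun n => -(M n ω)) := by
    intro hb
    obtain ⟨c, hc⟩ := hω2.mp hb
    exact hnc ω ⟨-c, by simpa using hc.neg⟩
  have hcount : ∀ n, (((Finset.range n).filter (fun i => X i ω ≤ x)).card : ℝ)
      = ∑ k ∈ Finset.range n, Y k ω := by
    intro n
    rw [Finset.sum_congr rfl (fun k _ => hYval k ω)]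
    rw [Finset.sum_boole]
  have hMsum : ∀ n, M n ω = (∑ k ∈ Finset.range n, Y (k+1) ω) - n * p := by
    intro n
    show (∑ k ∈ Finset.range n, (Y (k+1) ω - p)) = _
    rw [Finset.sum_sub_distrib, Finset.sum_const, Finset.card_range, nsmul_eq_mul]
  have hkey : ∀ n, (((Finset.range (n+1)).filter (fun i => X i ω ≤ x)).card : ℝ)
      = M n ω + Y 0 ω + n * p := by
    intro n
    rw [hcount, Finset.sum_range_succ', hMsum]
    ring
  constructor
  · rw [frequently_atTop]
    intro N
    obtain ⟨n, hnN, hn⟩ := frequently_atTop.mp (freq_gt_of_not_bddAbove hA (p - Y 0 ω)) N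
    refine ⟨n+1, le_trans hnN (Nat.le_succ n), ?_⟩
    rw [hkey n]
    push_cast
    linarith
  · rw [frequently_atTop]
    intro N
    obtain ⟨n, hnN, hn⟩ := frequently_atTop.mp (freq_gt_of_not_bddAbove hB (Y 0 ω - p)) N
    refine ⟨n+1, le_trans hnN (Nat.le_succ n), ?_⟩
    rw [hkey n]
    push_cast
    linarith

/-- If `lq F p < rq F p`, then almost surely the sequence of right sample
quantiles does not converge. -/
theorem right_sample_quantile_diverges
    {Ω : Type*} [MeasurableSpace Ω] (μ : Measure Ω) [IsProbabilityMeasure μ]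
    (X : ℕ → Ω → ℝ) (hmeas : ∀ i, Measurable (X i))
    (hindep : iIndepFun (m := fun _ => Real.measurableSpace) X μ)
    (hident : ∀ i, IdentDistrib (X i) (X 0) μ μ)
    (F : ℝ → ℝ) (hF : ∀ x, F x = (μ {ω | X 0 ω ≤ x}).toReal)
    (p : ℝ) (hp : p ∈ Set.Ioo (0 : ℝ) 1)
    (hlt : lq F p < rq F p) :
    ∀ᵐ ω ∂μ, ¬ ∃ L : ℝ, Tendsto (fun n => rq (edf X n ω) p) atTop (nhds L) := by
  classical
  have Fmono : Monotone F := by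
    intro u v huv
    rw [hF, hF]
    exact ENNReal.toReal_mono (measure_ne_top μ _)
      (measure_mono (fun ω h => le_trans h huv))
  -- the set where `p < F` is nonempty
  have hTne : ∃ y : ℝ, p < F y := by
    have hmono : Monotone (fun n : ℕ => {ω : Ω | X 0 ω ≤ (n:ℝ)}) := by
      intro m n hmn ω h
      simp only [Set.mem_setOf_eq] at h ⊢
      exact le_trans h (by exact_mod_cast hmn)
    have h1 := tendsto_measure_iUnion_atTop (μ := μ) hmono
    have h2 : (⋃ n : ℕ, {ω : Ω | X 0 ω ≤ (n:ℝ)}) = Set.univ := by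
      ext ω
      simp only [Set.mem_iUnion, Set.mem_setOf_eq, Set.mem_univ, iff_true]
      exact exists_nat_ge (X 0 ω)
    rw [h2, measure_univ] at h1
    have h3 : Tendsto (fun n : ℕ => (μ {ω : Ω | X 0 ω ≤ (n:ℝ)}).toReal) atTop (nhds 1) := by
      have := (ENNReal.tendsto_toReal (by norm_num : (1:ℝ≥0∞) ≠ ⊤)).comp h1
      simpa [Function.comp_def] using this
    obtain ⟨n, hn⟩ := (h3.eventually_const_lt hp.2).exists
    exact ⟨n, by rw [hF]; exact hn⟩
  have hSne : {y : ℝ | p ≤ F y}.Nonempty := by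
    obtain ⟨y, hy⟩ := hTne
    exact ⟨y, hy.le⟩
  have hTbdd : BddBelow {y : ℝ | p < F y} := by
    by_contra hc
    have hall : ∀ y : ℝ, p < F y := by
      intro y
      obtain ⟨t, ht, hty⟩ := not_bddBelow_iff.mp hc y
      exact lt_of_lt_of_le ht (Fmono hty.le)
    have hS : ¬ BddBelow {y : ℝ | p ≤ F y} := by
      rintro ⟨z, hz⟩
      have := hz (show z - 1 ∈ {y : ℝ | p ≤ F y} from (hall (z-1)).le)
      linarith
    have e1 : lq F p = 0 := Real.sInf_of_not_bddBelow hS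
    have e2 : rq F p = 0 := Real.sInf_of_not_bddBelow hc
    rw [e1, e2] at hlt
    exact lt_irrefl _ hlt
  have claim1 : ∀ y : ℝ, lq F p < y → p ≤ F y := by
    intro y hy
    obtain ⟨s, hs, hsy⟩ := exists_lt_of_csInf_lt hSne hy
    exact le_trans hs (Fmono hsy.le)
  have claim2 : ∀ y : ℝ, y < rq F p → F y ≤ p := by
    intro y hy
    by_contra hc
    push_neg at hc
    exact absurd (csInf_le hTbdd hc) (not_le.mpr hy)
  set a := lq F p with ha
  set b := rq F p with hb
  set x1 : ℝ := a + (b - a)/3 with hx1def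
  set x2 : ℝ := a + (b - a)*2/3 with hx2def
  have hab : a < b := hlt
  have hx1 : a < x1 ∧ x1 < b := ⟨by rw [hx1def]; linarith, by rw [hx1def]; linarith⟩
  have hx2 : a < x2 ∧ x2 < b := ⟨by rw [hx2def]; linarith, by rw [hx2def]; linarith⟩
  have hx12 : x1 < x2 := by rw [hx1def, hx2def]; linarith
  have hFx1 : F x1 = p := le_antisymm (claim2 _ hx1.2) (claim1 _ hx1.1)
  have hFx2 : F x2 = p := le_antisymm (claim2 _ hx2.2) (claim1 _ hx2.1)
  have hpre : ∀ (i : ℕ) (y : ℝ), {ω : Ω | X i ω ≤ y} = X i ⁻¹' Set.Iic y := fun _ _ => rfl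
  have hpx : ∀ y : ℝ, F y = p → ∀ i, (μ {ω | X i ω ≤ y}).toReal = p := by
    intro y hy i
    have := (hident i).measure_mem_eq (measurableSet_Iic (a := y))
    rw [hpre i y, this, ← hpre 0 y, ← hF y, hy]
  have hosc1 := walk_osc μ X hmeas hindep p x1 hp (hpx x1 hFx1)
  have hosc2 := walk_osc μ X hmeas hindep p x2 hp (hpx x2 hFx2)
  filter_upwards [hosc1, hosc2] with ω h1 h2
  rintro ⟨L, hL⟩
  -- key frequently statements
  have key1 : ∃ᶠ n : ℕ in atTop, rq (edf X n ω) p ≤ x1 := by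
    rw [frequently_atTop]
    intro N
    obtain ⟨n, hnN, hn⟩ := frequently_atTop.mp h1.1 (max N 1)
    have hn1 : 1 ≤ n := le_trans (le_max_right _ _) hnN
    have hnpos : (0:ℝ) < n := by exact_mod_cast hn1
    refine ⟨n, le_trans (le_max_left _ _) hnN, ?_⟩
    have hedf : p < edf X n ω x1 := by
      rw [edf, lt_div_iff₀ hnpos]
      linarith
    have hbddS : BddBelow {y : ℝ | p < edf X n ω y} := by
      have hne : (Finset.range n).Nonempty := ⟨0, Finset.mem_range.mpr hn1⟩
      refine ⟨(Finset.range n).inf' hne (fun i => X i ω), fun y hy => ?_⟩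
      by_contra hzy
      push_neg at hzy
      have hemp : (Finset.range n).filter (fun i => X i ω ≤ y) = ∅ := by
        rw [Finset.filter_eq_empty_iff]
        intro i hi hle
        exact absurd (le_trans (Finset.inf'_le _ hi) hle) (not_le.mpr hzy)
      have : edf X n ω y = 0 := by rw [edf, hemp]; simp
      rw [Set.mem_setOf_eq, this] at hy
      linarith [hp.1]
    exact csInf_le hbddS hedf
  have key2 : ∃ᶠ n : ℕ in atTop, x2 ≤ rq (edf X n ω) p := by
    rw [frequently_atTop]
    intro N
    obtain ⟨n, hnN, hn⟩ := frequently_atTop.mp h2.2 (max N 1)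
    have hn1 : 1 ≤ n := le_trans (le_max_right _ _) hnN
    have hnpos : (0:ℝ) < n := by exact_mod_cast hn1
    refine ⟨n, le_trans (le_max_left _ _) hnN, ?_⟩
    have hedf : edf X n ω x2 < p := by
      rw [edf, div_lt_iff₀ hnpos]
      linarith
    have hne : (Finset.range n).Nonempty := ⟨0, Finset.mem_range.mpr hn1⟩
    have hSnonempty : {y : ℝ | p < edf X n ω y}.Nonempty := by
      refine ⟨(Finset.range n).sup' hne (fun i => X i ω), ?_⟩
      have hfull : (Finset.range n).filter
          (fun i => X i ω ≤ (Finset.range n).sup' hne (fun i => X i ω)) = Finset.range n := by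
        rw [Finset.filter_eq_self]
        intro i hi
        exact Finset.le_sup' (fun i => X i ω) hi
      have : edf X n ω ((Finset.range n).sup' hne (fun i => X i ω)) = 1 := by
        rw [edf, hfull, Finset.card_range]
        field_simp
      rw [Set.mem_setOf_eq, this]
      exact hp.2
    refine le_csInf hSnonempty fun y hy => ?_
    by_contra hyx
    push_neg at hyx
    have hmono : edf X n ω y ≤ edf X n ω x2 := by
      have hcard : ((Finset.range n).filter (fun i => X i ω ≤ y)).card
          ≤ ((Finset.range n).filter (fun i => X i ω ≤ x2)).card := by
        refine Finset.card_le_card ?_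
        intro i hi
        simp only [Finset.mem_filter] at hi ⊢
        exact ⟨hi.1, le_trans hi.2 hyx.le⟩
      rw [edf, edf]
      have h2c : (((Finset.range n).filter (fun i => X i ω ≤ y)).card : ℝ)
          ≤ (((Finset.range n).filter (fun i => X i ω ≤ x2)).card : ℝ) := by
        exact_mod_cast hcard
      exact div_le_div_of_nonneg_right h2c hnpos.le |>.trans_eq rfl
    rw [Set.mem_setOf_eq] at hy
    linarith
  have hle1 : L ≤ x1 := by
    by_contra hc
    push_neg at hc
    obtain ⟨n, hn1, hn2⟩ := (key1.and_eventually (hL.eventually_const_lt hc)).exists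
    exact absurd hn1 (not_le.mpr hn2)
  have hle2 : x2 ≤ L := by
    by_contra hc
    push_neg at hc
    obtain ⟨n, hn1, hn2⟩ := (key2.and_eventually (hL.eventually_lt_const hc)).exists
    exact absurd hn1 (not_le.mpr hn2)
  linarith
end

section
/- Let X_1, X_2, ... be i.i.d. random variables with P(X_i = −1) = P(X_i = 1) = 1/2, and let F_n denote the empirical distribution function of the first n observations. Then with probability 1, both the sequence of left sample quantiles (lq_{F_n}(1/2))_{n≥1} and the sequence of right sample quantiles (rq_{F_n}(1/2))_{n≥1} fail to converge (they diverge almost surely). -/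
open MeasureTheory ProbabilityTheory Filter
open scoped ENNReal NNReal

section helpers

lemma exists_ge_pos_of_not_bddAbove {g : ℕ → ℝ} (h : ¬ BddAbove (Set.range g)) (N : ℕ) :
    ∃ n ≥ N, 0 < g n := by
  by_contra hcon
  push_neg at hcon
  apply h
  have hsub : Set.range g ⊆ (g '' Set.Iio N) ∪ Set.Iic 0 := by
    rintro _ ⟨n, rfl⟩
    rcases lt_or_ge n N with h' | h'
    · exact Or.inl ⟨n, h', rfl⟩
    · exact Or.inr (hcon n h')
  exact (((Set.finite_Iio N).image g).bddAbove.union bddAbove_Iic).mono hsub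

lemma exists_ge_neg_of_not_bddBelow {g : ℕ → ℝ} (h : ¬ BddBelow (Set.range g)) (N : ℕ) :
    ∃ n ≥ N, g n < 0 := by
  by_contra hcon
  push_neg at hcon
  apply h
  have hsub : Set.range g ⊆ (g '' Set.Iio N) ∪ Set.Ici 0 := by
    rintro _ ⟨n, rfl⟩
    rcases lt_or_ge n N with h' | h'
    · exact Or.inl ⟨n, h', rfl⟩
    · exact Or.inr (hcon n h')
  exact (((Set.finite_Iio N).image g).bddBelow.union bddBelow_Ici).mono hsub

end helpers

section det
variable {Ω : Type*} {X : ℕ → Ω → ℝ} {n : ℕ} {ω : Ω}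

/-- number of `-1`s among the first `n` observations -/
noncomputable def negcard (X : ℕ → Ω → ℝ) (n : ℕ) (ω : Ω) : ℕ :=
  ((Finset.range n).filter (fun i => X i ω = -1)).card

lemma edf_of_lt_neg_one (hv : ∀ i, X i ω = -1 ∨ X i ω = 1) {x : ℝ} (hx : x < -1) :
    edf X n ω x = 0 := by
  unfold edf
  rw [Finset.filter_false_of_mem, Finset.card_empty]
  · simp
  · intro i _
    rcases hv i with h | h <;> rw [h] <;> intro hc <;> linarith

lemma edf_at_neg_one (hv : ∀ i, X i ω = -1 ∨ X i ω = 1) :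
    edf X n ω (-1) = (negcard X n ω : ℝ) / n := by
  unfold edf negcard
  congr 3
  apply Finset.filter_congr
  intro i _
  constructor
  · intro h
    rcases hv i with h' | h'
    · exact h'
    · rw [h'] at h; norm_num at h
  · intro h; rw [h]

lemma edf_of_lt_one (hv : ∀ i, X i ω = -1 ∨ X i ω = 1) {x : ℝ} (hx : x < 1) :
    edf X n ω x ≤ (negcard X n ω : ℝ) / n := by
  unfold edf negcard
  rcases Nat.eq_zero_or_pos n with hn | hn
  · subst hn; simp
  · rw [div_le_div_iff_of_pos_right (by exact_mod_cast hn)]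
    have : (Finset.range n).filter (fun i => X i ω ≤ x) ⊆
        (Finset.range n).filter (fun i => X i ω = -1) := by
      intro i hi
      simp only [Finset.mem_filter] at hi ⊢
      refine ⟨hi.1, ?_⟩
      rcases hv i with h | h
      · exact h
      · exfalso; rw [h] at hi; linarith [hi.2]
    exact_mod_cast Finset.card_le_card this

lemma edf_at_one (hv : ∀ i, X i ω = -1 ∨ X i ω = 1) (hn : 0 < n) : edf X n ω 1 = 1 := by
  unfold edf
  rw [Finset.filter_true_of_mem, Finset.card_range, div_self (by exact_mod_cast hn.ne')]
  intro i _
  rcases hv i with h | h <;> rw [h] <;> norm_num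

lemma lq_eq_neg_one (hv : ∀ i, X i ω = -1 ∨ X i ω = 1)
    (hc : (1:ℝ)/2 < (negcard X n ω : ℝ) / n) : lq (edf X n ω) (1/2) = -1 := by
  apply IsLeast.csInf_eq
  constructor
  · show (1:ℝ)/2 ≤ edf X n ω (-1)
    rw [edf_at_neg_one hv]; linarith
  · intro x hx
    by_contra h
    push_neg at h
    have := edf_of_lt_neg_one (n := n) hv h
    simp only [Set.mem_setOf_eq] at hx
    rw [this] at hx; linarith

lemma rq_eq_neg_one (hv : ∀ i, X i ω = -1 ∨ X i ω = 1)
    (hc : (1:ℝ)/2 < (negcard X n ω : ℝ) / n) : rq (edf X n ω) (1/2) = -1 := by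
  apply IsLeast.csInf_eq
  constructor
  · show (1:ℝ)/2 < edf X n ω (-1)
    rw [edf_at_neg_one hv]; linarith
  · intro x hx
    by_contra h
    push_neg at h
    have := edf_of_lt_neg_one (n := n) hv h
    simp only [Set.mem_setOf_eq] at hx
    rw [this] at hx; linarith

lemma lq_eq_one (hv : ∀ i, X i ω = -1 ∨ X i ω = 1) (hn : 0 < n)
    (hc : (negcard X n ω : ℝ) / n < 1/2) : lq (edf X n ω) (1/2) = 1 := by
  apply IsLeast.csInf_eq
  constructor
  · show (1:ℝ)/2 ≤ edf X n ω 1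
    rw [edf_at_one hv hn]; norm_num
  · intro x hx
    by_contra h
    push_neg at h
    have := edf_of_lt_one (n := n) hv h
    simp only [Set.mem_setOf_eq] at hx
    linarith

lemma rq_eq_one (hv : ∀ i, X i ω = -1 ∨ X i ω = 1) (hn : 0 < n)
    (hc : (negcard X n ω : ℝ) / n < 1/2) : rq (edf X n ω) (1/2) = 1 := by
  apply IsLeast.csInf_eq
  constructor
  · show (1:ℝ)/2 < edf X n ω 1
    rw [edf_at_one hv hn]; norm_num
  · intro x hx
    by_contra h
    push_neg at h
    have := edf_of_lt_one (n := n) hv h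
    simp only [Set.mem_setOf_eq] at hx
    linarith

lemma sum_eq_sub (hv : ∀ i, X i ω = -1 ∨ X i ω = 1) :
    ∑ i ∈ Finset.range n, X i ω = (n : ℝ) - 2 * (negcard X n ω : ℝ) := by
  rw [← Finset.sum_filter_add_sum_filter_not (Finset.range n) (fun i => X i ω = -1)]
  have h1 : ∑ i ∈ (Finset.range n).filter (fun i => X i ω = -1), X i ω
      = -(negcard X n ω : ℝ) := by
    rw [Finset.sum_congr rfl (fun i hi => (Finset.mem_filter.mp hi).2),
      Finset.sum_const, negcard]
    simp
  have h2 : ∑ i ∈ (Finset.range n).filter (fun i => ¬ X i ω = -1), X i ω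
      = (n : ℝ) - (negcard X n ω : ℝ) := by
    have : ∀ i ∈ (Finset.range n).filter (fun i => ¬ X i ω = -1), X i ω = 1 := by
      intro i hi
      rcases hv i with h | h
      · exact absurd h (Finset.mem_filter.mp hi).2
      · exact h
    rw [Finset.sum_congr rfl this, Finset.sum_const]
    have := Finset.card_filter_add_card_filter_not
      (s := Finset.range n) (p := fun i => X i ω = -1)
    rw [Finset.card_range] at this
    have h3 : ((Finset.range n).filter (fun i => ¬ X i ω = -1)).card
        = n - negcard X n ω := by rw [negcard]; omega
    have h4 : negcard X n ω ≤ n := by rw [negcard]; omega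
    rw [h3, nsmul_eq_mul, mul_one, Nat.cast_sub h4]
  rw [h1, h2]; ring

lemma pos_sum_negcard (hv : ∀ i, X i ω = -1 ∨ X i ω = 1) (hn : 0 < n)
    (hs : 0 < ∑ i ∈ Finset.range n, X i ω) : (negcard X n ω : ℝ) / n < 1/2 := by
  rw [sum_eq_sub hv] at hs
  rw [div_lt_iff₀ (by exact_mod_cast hn)]
  linarith

lemma neg_sum_negcard (hv : ∀ i, X i ω = -1 ∨ X i ω = 1) (hn : 0 < n)
    (hs : ∑ i ∈ Finset.range n, X i ω < 0) : (1:ℝ)/2 < (negcard X n ω : ℝ) / n := by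
  rw [sum_eq_sub hv] at hs
  rw [lt_div_iff₀ (by exact_mod_cast hn)]
  linarith

end det


section mart

variable {Ω : Type*} [MeasurableSpace Ω] (μ : Measure Ω) [IsProbabilityMeasure μ]
  (X : ℕ → Ω → ℝ)

theorem walk_unbounded (hmeas : ∀ i, Measurable (X i))
    (hindep : iIndepFun (m := fun _ => Real.measurableSpace) X μ)
    (hident : ∀ i, IdentDistrib (X i) (X 0) μ μ)
    (hm1 : μ {ω | X 0 ω = -1} = 1/2) (h1 : μ {ω | X 0 ω = 1} = 1/2) :
    ∀ᵐ ω ∂μ,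
      (∀ i, X i ω = -1 ∨ X i ω = 1) ∧
      ¬ BddAbove (Set.range fun n => ∑ k ∈ Finset.range (n+1), X k ω) ∧
      ¬ BddBelow (Set.range fun n => ∑ k ∈ Finset.range (n+1), X k ω) := by
  classical
  have hSM : ∀ i, StronglyMeasurable (X i) := fun i => (hmeas i).stronglyMeasurable
  have hs11 : MeasurableSet ({-1, 1} : Set ℝ) :=
    ((Set.finite_singleton (1:ℝ)).insert (-1)).measurableSet
  have hpre : μ (X 0 ⁻¹' {-1, 1}) = 1 := by
    have hB : MeasurableSet (X 0 ⁻¹' {(1:ℝ)}) := hmeas 0 (measurableSet_singleton _)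
    have hd : Disjoint (X 0 ⁻¹' {(-1:ℝ)}) (X 0 ⁻¹' {(1:ℝ)}) := by
      rw [Set.disjoint_left]
      intro ω hω1 hω2
      simp only [Set.mem_preimage, Set.mem_singleton_iff] at hω1 hω2
      rw [hω1] at hω2; norm_num at hω2
    have hsplit : (X 0 ⁻¹' ({-1, 1} : Set ℝ)) = X 0 ⁻¹' {(-1:ℝ)} ∪ X 0 ⁻¹' {(1:ℝ)} := by
      rw [← Set.preimage_union]
      rfl
    have hmA : μ (X 0 ⁻¹' {(-1:ℝ)}) = 1/2 := hm1
    have hmB : μ (X 0 ⁻¹' {(1:ℝ)}) = 1/2 := h1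
    rw [hsplit, measure_union hd hB, hmA, hmB, one_div, ENNReal.inv_two_add_inv_two]
  have hval : ∀ i, ∀ᵐ ω ∂μ, X i ω = -1 ∨ X i ω = 1 := by
    intro i
    have h := ((hident i).measure_mem_eq hs11).trans hpre
    have hset : {ω | ¬ (X i ω = -1 ∨ X i ω = 1)} = (X i ⁻¹' ({-1,1} : Set ℝ))ᶜ := by
      ext ω
      simp [Set.mem_preimage]
    rw [ae_iff, hset, prob_compl_eq_zero_iff (hmeas i hs11)]
    exact h
  have hvala : ∀ᵐ ω ∂μ, ∀ i, X i ω = -1 ∨ X i ω = 1 := ae_all_iff.mpr hval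
  have hint : ∀ i, Integrable (X i) μ := by
    intro i
    refine Integrable.mono' (integrable_const 1) (hSM i).aestronglyMeasurable ?_
    filter_upwards [hval i] with ω h
    rcases h with h | h <;> rw [h] <;> norm_num
  have hE0 : ∫ ω, X 0 ω ∂μ = 0 := by
    have hA : MeasurableSet {ω | X 0 ω = -1} := hmeas 0 (measurableSet_singleton _)
    have hB : MeasurableSet {ω | X 0 ω = 1} := hmeas 0 (measurableSet_singleton _)
    have hXg : X 0 =ᵐ[μ] fun ω => ({ω | X 0 ω = -1}.indicator (fun _ => (-1:ℝ))) ω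
        + ({ω | X 0 ω = 1}.indicator (fun _ => (1:ℝ))) ω := by
      filter_upwards [hval 0] with ω h
      rcases h with h | h
      · have hωA : ω ∈ {ω | X 0 ω = -1} := h
        have hωB : ω ∉ {ω | X 0 ω = 1} := by
          simp only [Set.mem_setOf_eq, h]; norm_num
        simp [Set.indicator_of_mem hωA, Set.indicator_of_notMem hωB, h]
      · have hωB : ω ∈ {ω | X 0 ω = 1} := h
        have hωA : ω ∉ {ω | X 0 ω = -1} := by
          simp only [Set.mem_setOf_eq, h]; norm_num
        simp [Set.indicator_of_mem hωB, Set.indicator_of_notMem hωA, h]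
    rw [integral_congr_ae hXg,
      integral_add ((integrable_const _).indicator hA) ((integrable_const _).indicator hB),
      integral_indicator_const _ hA, integral_indicator_const _ hB, measureReal_def, measureReal_def, hm1, h1]
    have htr : ((1:ℝ≥0∞)/2).toReal = 1/2 := by
      rw [ENNReal.toReal_div]; norm_num
    rw [htr]
    norm_num
  have hEi : ∀ i, (∫ ω, X i ω ∂μ) = 0 := fun i => ((hident i).integral_eq).trans hE0
  set ℱ := Filtration.natural X hSM with hℱdef
  have hadp : ∀ n, StronglyMeasurable[ℱ n] (fun ω => ∑ k ∈ Finset.range (n+1), X k ω) := by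
    intro n
    apply Finset.stronglyMeasurable_fun_sum
    intro k hk
    exact ((Filtration.stronglyAdapted_natural hSM) k).mono
      (ℱ.mono (Nat.lt_succ_iff.mp (Finset.mem_range.mp hk)))
  have hfint : ∀ n, Integrable (fun ω => ∑ k ∈ Finset.range (n+1), X k ω) μ :=
    fun n => integrable_finset_sum _ (fun k _ => hint k)
  have hmart : Martingale (fun n ω => ∑ k ∈ Finset.range (n+1), X k ω) ℱ μ := by
    refine ⟨hadp, ?_⟩
    intro i j hij
    have hgint : Integrable (fun ω => ∑ k ∈ Finset.Ico (i+1) (j+1), X k ω) μ :=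
      integrable_finset_sum _ (fun k _ => hint k)
    have hsplit : (fun ω => ∑ k ∈ Finset.range (j+1), X k ω)
        = (fun ω => ∑ k ∈ Finset.range (i+1), X k ω)
          + (fun ω => ∑ k ∈ Finset.Ico (i+1) (j+1), X k ω) := by
      funext ω
      rw [Pi.add_apply, Finset.range_eq_Ico, Finset.range_eq_Ico]
      exact (Finset.sum_Ico_consecutive (fun k => X k ω) (Nat.zero_le (i+1))
        (Nat.succ_le_succ hij)).symm
    show μ[(fun ω => ∑ k ∈ Finset.range (j+1), X k ω)|ℱ i]
        =ᵐ[μ] fun ω => ∑ k ∈ Finset.range (i+1), X k ω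
    rw [hsplit]
    refine (condExp_add (hfint i) hgint (ℱ i)).trans ?_
    have h1 : μ[(fun ω => ∑ k ∈ Finset.range (i+1), X k ω)|ℱ i]
        = fun ω => ∑ k ∈ Finset.range (i+1), X k ω :=
      condExp_of_stronglyMeasurable (ℱ.le i) (hadp i) (hfint i)
    have hg' : (fun ω => ∑ k ∈ Finset.Ico (i+1) (j+1), X k ω)
        = ∑ k ∈ Finset.Ico (i+1) (j+1), X k := by
      funext ω; rw [Finset.sum_apply]
    have h2 : μ[(fun ω => ∑ k ∈ Finset.Ico (i+1) (j+1), X k ω)|ℱ i] =ᵐ[μ] 0 := by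
      rw [hg']
      refine (condExp_finsetSum (fun k _ => hint k) (ℱ i)).trans ?_
      have hz' : ∀ᵐ ω ∂μ, ∀ k ∈ (↑(Finset.Ico (i+1) (j+1)) : Set ℕ), (μ[X k|ℱ i]) ω = 0 := by
        rw [ae_ball_iff (Finset.countable_toSet _)]
        intro k hk
        have hik : i < k := Nat.lt_of_succ_le (Finset.mem_Ico.mp (Finset.mem_coe.mp hk)).1
        filter_upwards [hindep.condExp_natural_ae_eq_of_lt hSM hik] with ω hω
        rw [hω, hEi k]
      filter_upwards [hz'] with ω hω
      simp only [Finset.sum_apply, Pi.zero_apply]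
      exact Finset.sum_eq_zero (fun k hk => hω k (Finset.mem_coe.mpr hk))
    filter_upwards [h2] with ω hω2
    simp only [Pi.add_apply, h1, hω2, Pi.zero_apply, add_zero]
  have hbdd : ∀ᵐ ω ∂μ, ∀ i,
      |(fun n ω => ∑ k ∈ Finset.range (n+1), X k ω) (i+1) ω
        - (fun n ω => ∑ k ∈ Finset.range (n+1), X k ω) i ω| ≤ ((1 : ℝ≥0) : ℝ) := by
    filter_upwards [hvala] with ω h i
    have hstep : (∑ k ∈ Finset.range (i+1+1), X k ω) - ∑ k ∈ Finset.range (i+1), X k ω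
        = X (i+1) ω := by
      rw [Finset.sum_range_succ]; ring
    simp only [hstep]
    rcases h (i+1) with h' | h' <;> rw [h'] <;> norm_num
  have hnotconv : ∀ᵐ ω ∂μ,
      ¬ ∃ c, Tendsto (fun n => ∑ k ∈ Finset.range (n+1), X k ω) atTop (nhds c) := by
    filter_upwards [hvala] with ω h
    rintro ⟨c, hc⟩
    have h2 : Tendsto (fun n => (∑ k ∈ Finset.range (n+1+1), X k ω)
        - ∑ k ∈ Finset.range (n+1), X k ω) atTop (nhds 0) := by
      have := (hc.comp (tendsto_add_atTop_nat 1)).sub hc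
      simpa using this
    have h3 := h2.abs
    have h4 : (fun n => |(∑ k ∈ Finset.range (n+1+1), X k ω)
        - ∑ k ∈ Finset.range (n+1), X k ω|) = fun _ => (1:ℝ) := by
      funext n
      have hstep : (∑ k ∈ Finset.range (n+1+1), X k ω) - ∑ k ∈ Finset.range (n+1), X k ω
          = X (n+1) ω := by
        rw [Finset.sum_range_succ]; ring
      rw [hstep]
      rcases h (n+1) with h' | h' <;> rw [h'] <;> norm_num
    rw [h4] at h3
    simp only [abs_zero] at h3
    have : (0:ℝ) = 1 := tendsto_nhds_unique h3 tendsto_const_nhds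
    norm_num at this
  have hosc := hmart.submartingale.bddAbove_iff_exists_tendsto hbdd
  have hbb := hmart.bddAbove_range_iff_bddBelow_range hbdd
  filter_upwards [hvala, hnotconv, hosc, hbb] with ω hv hnc hab hbbω
  refine ⟨hv, fun h => hnc (hab.mp h), fun h => hnc (hab.mp (hbbω.mpr h))⟩

end mart


/-- For an i.i.d. fair-coin sequence taking values `-1` and `1` each with
probability `1/2`, both the left and right sample median sequences fail to
converge almost surely. -/
theorem fair_coin_sample_medians_diverge
    {Ω : Type*} [MeasurableSpace Ω] (μ : Measure Ω) [IsProbabilityMeasure μ]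
    (X : ℕ → Ω → ℝ) (hmeas : ∀ i, Measurable (X i))
    (hindep : iIndepFun (m := fun _ => Real.measurableSpace) X μ)
    (hident : ∀ i, IdentDistrib (X i) (X 0) μ μ)
    (hm1 : μ {ω | X 0 ω = -1} = 1/2) (h1 : μ {ω | X 0 ω = 1} = 1/2) :
    ∀ᵐ ω ∂μ,
      (¬ ∃ L : ℝ, Tendsto (fun n => lq (edf X n ω) (1/2)) atTop (nhds L)) ∧
      (¬ ∃ L : ℝ, Tendsto (fun n => rq (edf X n ω) (1/2)) atTop (nhds L)) := by
  filter_upwards [walk_unbounded μ X hmeas hindep hident hm1 h1] with ω hω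
  obtain ⟨hv, hA, hB⟩ := hω
  -- frequently the walk is positive / negative at positive times
  have hfqpos : ∀ N : ℕ, ∃ m ≥ N, 0 < m ∧ 0 < ∑ k ∈ Finset.range m, X k ω := by
    intro N
    obtain ⟨n, hn, hpos⟩ := exists_ge_pos_of_not_bddAbove hA N
    exact ⟨n + 1, le_trans hn (Nat.le_succ n), Nat.succ_pos n, hpos⟩
  have hfqneg : ∀ N : ℕ, ∃ m ≥ N, 0 < m ∧ ∑ k ∈ Finset.range m, X k ω < 0 := by
    intro N
    obtain ⟨n, hn, hneg⟩ := exists_ge_neg_of_not_bddBelow hB N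
    exact ⟨n + 1, le_trans hn (Nat.le_succ n), Nat.succ_pos n, hneg⟩
  constructor
  · rintro ⟨L, hL⟩
    obtain ⟨N, hN⟩ := Metric.tendsto_atTop.mp hL 1 one_pos
    obtain ⟨m1, hm1ge, hm1pos, hs1⟩ := hfqpos N
    obtain ⟨m2, hm2ge, hm2pos, hs2⟩ := hfqneg N
    have e1 : lq (edf X m1 ω) (1/2) = 1 :=
      lq_eq_one hv hm1pos (pos_sum_negcard hv hm1pos hs1)
    have e2 : lq (edf X m2 ω) (1/2) = -1 :=
      lq_eq_neg_one hv (neg_sum_negcard hv hm2pos hs2)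
    have d1 := hN m1 hm1ge
    have d2 := hN m2 hm2ge
    rw [e1, Real.dist_eq, abs_lt] at d1
    rw [e2, Real.dist_eq, abs_lt] at d2
    linarith [d1.1, d1.2, d2.1, d2.2]
  · rintro ⟨L, hL⟩
    obtain ⟨N, hN⟩ := Metric.tendsto_atTop.mp hL 1 one_pos
    obtain ⟨m1, hm1ge, hm1pos, hs1⟩ := hfqpos N
    obtain ⟨m2, hm2ge, hm2pos, hs2⟩ := hfqneg N
    have e1 : rq (edf X m1 ω) (1/2) = 1 :=
      rq_eq_one hv hm1pos (pos_sum_negcard hv hm1pos hs1)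
    have e2 : rq (edf X m2 ω) (1/2) = -1 :=
      rq_eq_neg_one hv (neg_sum_negcard hv hm2pos hs2)
    have d1 := hN m1 hm1ge
    have d2 := hN m2 hm2ge
    rw [e1, Real.dist_eq, abs_lt] at d1
    rw [e2, Real.dist_eq, abs_lt] at d2
    linarith [d1.1, d1.2, d2.1, d2.2]
end

section
/- Let X be a real random variable with distribution function F_X, let p ∈ (0,1), and suppose lq_{F_X}(p) < rq_{F_X}(p). Set h = rq_{F_X}(p) − lq_{F_X}(p) and define Y = X if X ≤ lq_{F_X}(p) and Y = X − h if X ≥ rq_{F_X}(p) (the event lq_{F_X}(p) < X < rq_{F_X}(p) has probability zero). Then the distribution function F_Y of Y satisfies lq_{F_Y}(p) = rq_{F_Y}(p) = lq_{F_X}(p). -/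
open MeasureTheory ProbabilityTheory Filter

/-- Shifting the values of `X` above `rq F p` back by `h = rq F p - lq F p`
produces a random variable `Y` whose left and right quantiles at `p` both
equal `lq F p`. -/
theorem shifted_rv_quantiles_coincide
    {Ω : Type*} [MeasurableSpace Ω] (μ : Measure Ω) [IsProbabilityMeasure μ]
    (X : Ω → ℝ) (hX : Measurable X)
    (F : ℝ → ℝ) (hF : ∀ x, F x = (μ {ω | X ω ≤ x}).toReal)
    (p : ℝ) (hp : p ∈ Set.Ioo (0 : ℝ) 1) (hlt : lq F p < rq F p)
    (h : ℝ) (hh : h = rq F p - lq F p)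
    (Y : Ω → ℝ) (hY : ∀ ω, Y ω = if X ω ≤ lq F p then X ω else X ω - h)
    (FY : ℝ → ℝ) (hFY : ∀ x, FY x = (μ {ω | Y ω ≤ x}).toReal) :
    lq FY p = lq F p ∧ rq FY p = lq F p := by
  obtain ⟨hp0, hp1⟩ := hp
  set a := lq F p with hadef
  set b := rq F p with hbdef
  set ν := μ.map X with hν
  haveI hνprob : IsProbabilityMeasure ν := Measure.isProbabilityMeasure_map hX.aemeasurable
  have hFc : ∀ x, F x = cdf ν x := by
    intro x
    rw [hF, cdf_eq_real, measureReal_def, hν, Measure.map_apply hX measurableSet_Iic]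
    rfl
  have hFmono : Monotone F := by
    intro x y hxy
    rw [hFc, hFc]
    exact monotone_cdf ν hxy
  -- the set defining the right quantile is nonempty
  have hex : ∃ x, p < F x := by
    obtain ⟨x, hx⟩ := ((tendsto_cdf_atTop ν).eventually (eventually_gt_nhds hp1)).exists
    exact ⟨x, by rw [hFc]; exact hx⟩
  have hSne : {x : ℝ | p ≤ F x}.Nonempty := hex.imp fun x hx => le_of_lt hx
  have hTne : {x : ℝ | p < F x}.Nonempty := hex
  -- the set defining the left quantile is bounded below
  have hbdd : BddBelow {x : ℝ | p ≤ F x} := by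
    obtain ⟨m, hm⟩ := (eventually_atBot.1 ((tendsto_cdf_atBot ν).eventually
      (eventually_lt_nhds hp0)))
    refine ⟨m, fun x hx => ?_⟩
    by_contra hxm
    have := hm x (le_of_lt (lt_of_not_ge hxm))
    rw [← hFc] at this
    exact absurd hx (not_le.2 this)
  have hbddT : BddBelow {x : ℝ | p < F x} := by
    obtain ⟨m, hm⟩ := hbdd
    refine ⟨m, fun x hx => hm ?_⟩
    exact Set.mem_setOf.2 (le_of_lt (Set.mem_setOf.1 hx))
  -- basic quantile facts
  have f1 : ∀ x, x < a → F x < p := by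
    intro x hx
    by_contra hc
    exact absurd (csInf_le hbdd (not_lt.1 hc)) (not_le.2 hx)
  have f2 : p ≤ F a := by
    have htd : Filter.Tendsto (cdf ν) (nhdsWithin a (Set.Ioi a)) (nhds (cdf ν a)) :=
      ((cdf ν).right_continuous a).tendsto.mono_left
        (nhdsWithin_mono a Set.Ioi_subset_Ici_self)
    have hev : ∀ᶠ x in nhdsWithin a (Set.Ioi a), p ≤ cdf ν x := by
      filter_upwards [self_mem_nhdsWithin] with x hx
      obtain ⟨s, hs, hsx⟩ := exists_lt_of_csInf_lt hSne hx
      rw [← hFc]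
      exact le_trans hs (hFmono (le_of_lt hsx))
    rw [hFc]
    exact ge_of_tendsto htd hev
  have f3 : ∀ x, b < x → p < F x := by
    intro x hx
    obtain ⟨t, ht, htx⟩ := exists_lt_of_csInf_lt hTne hx
    exact lt_of_lt_of_le ht (hFmono (le_of_lt htx))
  have f4 : ∀ x, a ≤ x → x < b → F x = p := by
    intro x hax hxb
    refine le_antisymm ?_ (le_trans f2 (hFmono hax))
    by_contra hc
    exact absurd (csInf_le hbddT (not_le.1 hc)) (not_le.2 hxb)
  have hab : a ≤ b := le_of_lt hlt
  have hh0 : 0 ≤ h := by rw [hh]; linarith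
  -- the in-between event has measure zero
  have C1 : ∀ t, t < b → μ {ω | a < X ω ∧ X ω ≤ t} = 0 := by
    intro t htb
    rcases lt_or_ge t a with hta | hat
    · have : {ω | a < X ω ∧ X ω ≤ t} = ∅ := by
        ext ω
        simp only [Set.mem_setOf_eq, Set.mem_empty_iff_false, iff_false, not_and, not_le]
        intro hω
        linarith
      rw [this, measure_empty]
    · have hsplit : μ {ω | X ω ≤ t} = μ {ω | X ω ≤ a} + μ {ω | a < X ω ∧ X ω ≤ t} := by
        rw [← measure_union]
        · congr 1
          ext ω
          simp only [Set.mem_union, Set.mem_setOf_eq]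
          constructor
          · intro hω
            rcases le_or_gt (X ω) a with hle | hgt
            · exact Or.inl hle
            · exact Or.inr ⟨hgt, hω⟩
          · rintro (hω | ⟨_, hω⟩)
            · exact le_trans hω hat
            · exact hω
        · rw [Set.disjoint_left]
          intro ω hω1 hω2
          exact absurd hω2.1 (not_lt.2 hω1)
        · exact (hX measurableSet_Ioi).inter (hX measurableSet_Iic)
      have hfin1 : μ {ω | X ω ≤ a} ≠ ⊤ := measure_ne_top μ _
      have hfin2 : μ {ω | a < X ω ∧ X ω ≤ t} ≠ ⊤ := measure_ne_top μ _
      have hFt : F t = p := f4 t hat htb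
      have hFa : F a = p := f4 a le_rfl hlt
      have htoReal : (μ {ω | X ω ≤ a}).toReal + (μ {ω | a < X ω ∧ X ω ≤ t}).toReal
          = (μ {ω | X ω ≤ a}).toReal := by
        rw [← ENNReal.toReal_add hfin1 hfin2, ← hsplit, ← hF, ← hF, hFt, hFa]
      have hz : (μ {ω | a < X ω ∧ X ω ≤ t}).toReal = 0 := by linarith
      exact (ENNReal.toReal_eq_zero_iff _).1 hz |>.resolve_right hfin2
  -- the cdf of Y
  have g1 : ∀ x, a ≤ x → FY x = F (x + h) := by
    intro x hax
    have hset : {ω | Y ω ≤ x} = {ω | X ω ≤ x + h} := by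
      ext ω
      simp only [Set.mem_setOf_eq, hY ω]
      rcases le_or_gt (X ω) a with hle | hgt
      · rw [if_pos hle]
        constructor
        · intro _; linarith
        · intro _; linarith
      · rw [if_neg (not_le.2 hgt)]
        exact sub_le_iff_le_add
    rw [hFY, hF, hset]
  have g2 : ∀ x, x < a → FY x = F x := by
    intro x hxa
    have hle : μ {ω | Y ω ≤ x} ≤ μ {ω | X ω ≤ x} := by
      calc μ {ω | Y ω ≤ x}
          ≤ μ ({ω | X ω ≤ x} ∪ {ω | a < X ω ∧ X ω ≤ x + h}) := by
            apply measure_mono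
            intro ω hω
            simp only [Set.mem_setOf_eq, hY ω] at hω
            rcases le_or_gt (X ω) a with hc | hc
            · rw [if_pos hc] at hω
              exact Or.inl hω
            · rw [if_neg (not_le.2 hc)] at hω
              exact Or.inr ⟨hc, by linarith⟩
        _ ≤ μ {ω | X ω ≤ x} + μ {ω | a < X ω ∧ X ω ≤ x + h} := measure_union_le _ _
        _ = μ {ω | X ω ≤ x} := by
            rw [C1 (x + h) (by rw [hh]; linarith), add_zero]
    have hge : μ {ω | X ω ≤ x} ≤ μ {ω | Y ω ≤ x} := by
      apply measure_mono
      intro ω hω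
      simp only [Set.mem_setOf_eq] at hω ⊢
      rw [hY ω, if_pos (by linarith : X ω ≤ a)]
      exact hω
    rw [hFY, hF, le_antisymm hle hge]
  -- conclude
  have hSY : {x : ℝ | p ≤ FY x} = Set.Ici a := by
    ext x
    simp only [Set.mem_setOf_eq, Set.mem_Ici]
    constructor
    · intro hx
      by_contra hc
      rw [g2 x (not_le.1 hc)] at hx
      exact absurd hx (not_le.2 (f1 x (not_le.1 hc)))
    · intro hx
      rw [g1 x hx]
      refine le_trans f2 (hFmono ?_)
      rw [hh]; linarith
  have hTYsub1 : Set.Ioi a ⊆ {x : ℝ | p < FY x} := by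
    intro x hx
    have hx' : a < x := hx
    rw [Set.mem_setOf_eq, g1 x (le_of_lt hx')]
    exact f3 (x + h) (by rw [hh]; linarith)
  have hTYsub2 : {x : ℝ | p < FY x} ⊆ Set.Ici a := by
    intro x hx
    by_contra hc
    rw [Set.mem_setOf_eq, g2 x (not_le.1 (by simpa using hc))] at hx
    exact absurd (f1 x (not_le.1 (by simpa using hc))) (not_lt.2 (le_of_lt hx))
  constructor
  · rw [lq, hSY, csInf_Ici]
  · refine le_antisymm ?_ ?_
    · calc rq FY p ≤ sInf (Set.Ioi a) := by
            exact csInf_le_csInf (⟨a, fun x hx => hTYsub2 hx⟩) (Set.nonempty_Ioi) hTYsub1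
        _ = a := csInf_Ioi
    · exact le_csInf ⟨a + 1, hTYsub1 (by simp)⟩ fun x hx => hTYsub2 hx
end

section
/- Let X_1, X_2, ... be i.i.d. real random variables with distribution function F_X, let p ∈ (0,1) with lq_{F_X}(p) < rq_{F_X}(p), and define Y_i = 1 if X_i ≥ rq_{F_X}(p) and Y_i = 0 if X_i ≤ lq_{F_X}(p). Then Y_1, Y_2, ... are i.i.d. with P(Y_i = 0) = p and P(Y_i = 1) = 1 − p, and if the left sample quantile sequence lq_{F_{n,Y}}(p) of the Y-sample diverges almost surely, then the left sample quantile sequence lq_{F_{n,X}}(p) of the X-sample diverges almost surely. -/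
open MeasureTheory ProbabilityTheory Filter

lemma FX_at_lq {F : ℝ → ℝ} (hmono : Monotone F)
    (hrc : ∀ x, ContinuousWithinAt F (Set.Ici x) x)
    (h0 : Tendsto F atBot (nhds 0)) (h1 : Tendsto F atTop (nhds 1))
    {p : ℝ} (hp : p ∈ Set.Ioo (0:ℝ) 1) (hlt : lq F p < rq F p) :
    F (lq F p) = p := by
  obtain ⟨x0, hx0⟩ : ∃ x0, F x0 < p := (h0.eventually (eventually_lt_nhds hp.1)).exists
  obtain ⟨x1, hx1⟩ : ∃ x1, p ≤ F x1 :=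
    ((h1.eventually (eventually_gt_nhds hp.2)).exists).imp (fun _ h => h.le)
  have hSne : {x : ℝ | p ≤ F x}.Nonempty := ⟨x1, hx1⟩
  have hSbdd : BddBelow {x : ℝ | p ≤ F x} := by
    refine ⟨x0, fun y hy => ?_⟩
    by_contra hyx
    exact absurd (le_trans hy (hmono (le_of_not_ge hyx))) (not_le.2 hx0)
  have hle : F (lq F p) ≤ p := by
    by_contra h
    have hmem : lq F p ∈ {x : ℝ | p < F x} := not_le.1 h
    have hbdd' : BddBelow {x : ℝ | p < F x} :=
      BddBelow.mono (fun y (hy : p < F y) => hy.le) hSbdd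
    exact absurd (csInf_le hbdd' hmem) (not_le.2 hlt)
  refine le_antisymm hle ?_
  by_contra h
  have h' : F (lq F p) < p := lt_of_not_ge h
  have := (hrc (lq F p)).eventually (eventually_lt_nhds h')
  obtain ⟨u, hu, hu'⟩ := mem_nhdsGE_iff_exists_Ico_subset.1 this
  obtain ⟨y, hy, hylt⟩ := (csInf_lt_iff hSbdd hSne).1
    (show sInf {x : ℝ | p ≤ F x} < u by simpa [lq] using hu)
  have hyl : lq F p ≤ y := csInf_le hSbdd hy
  have : F y < p := hu' ⟨hyl, hylt⟩
  exact absurd hy (not_le.2 this)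

lemma F_le_of_lt_rq {F : ℝ → ℝ} (hmono : Monotone F)
    (h0 : Tendsto F atBot (nhds 0)) {p : ℝ} (hp0 : 0 < p)
    {x : ℝ} (hx : x < rq F p) : F x ≤ p := by
  obtain ⟨x0, hx0⟩ : ∃ x0, F x0 < p := (h0.eventually (eventually_lt_nhds hp0)).exists
  by_contra h
  have hbdd : BddBelow {x : ℝ | p < F x} := by
    refine ⟨x0, fun y hy => ?_⟩
    by_contra hyx
    exact absurd (lt_of_lt_of_le hy (hmono (le_of_not_ge hyx))) (not_lt.2 hx0.le)
  exact absurd (csInf_le hbdd (not_le.1 h : p < F x)) (not_le.2 hx)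

lemma det_lemma {Ω : Type*} (X Y : ℕ → Ω → ℝ) (ω : Ω) (l r p : ℝ)
    (hp0 : 0 < p) (hp1 : p < 1) (hlr : l < r)
    (hY : ∀ i, Y i ω = if X i ω ≤ l then 0 else 1)
    (havoid : ∀ i, X i ω ≤ l ∨ r ≤ X i ω)
    (hdiv : ¬ ∃ L : ℝ, Tendsto (fun n => lq (edf Y n ω) p) atTop (nhds L)) :
    ¬ ∃ L : ℝ, Tendsto (fun n => lq (edf X n ω) p) atTop (nhds L) := by
  classical
  set k : ℕ → ℕ := fun n => ((Finset.range n).filter (fun i => X i ω ≤ l)).card with hk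
  have hY01 : ∀ i, Y i ω = 0 ∨ Y i ω = 1 := by
    intro i; rw [hY i]; split <;> simp
  have hedfYneg : ∀ n (x : ℝ), x < 0 → edf Y n ω x = 0 := by
    intro n x hx
    have : (Finset.range n).filter (fun i => Y i ω ≤ x) = ∅ := by
      apply Finset.filter_false_of_mem
      intro i _
      rcases hY01 i with h | h <;> rw [h] <;> intro hc <;> linarith
    simp [edf, this]
  have hedfYmid : ∀ n (x : ℝ), 0 ≤ x → x < 1 → edf Y n ω x = (k n : ℝ) / n := by
    intro n x hx0 hx1
    have : (Finset.range n).filter (fun i => Y i ω ≤ x)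
        = (Finset.range n).filter (fun i => X i ω ≤ l) := by
      apply Finset.filter_congr
      intro i _
      rw [hY i]
      by_cases h : X i ω ≤ l
      · simp [h, hx0]
      · simp only [h, if_false]
        simp only [iff_false, h]
        intro hc; linarith
    simp [edf, this, hk]
  have hedfY1 : ∀ n, 1 ≤ n → ∀ x : ℝ, 1 ≤ x → edf Y n ω x = 1 := by
    intro n hn x hx
    have : (Finset.range n).filter (fun i => Y i ω ≤ x) = Finset.range n := by
      apply Finset.filter_true_of_mem
      intro i _
      rcases hY01 i with h | h <;> rw [h] <;> linarith
    rw [edf, this, Finset.card_range, div_self (Nat.cast_pos.2 hn).ne']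
  have c2 : ∀ n, 1 ≤ n → p ≤ (k n : ℝ) / n → lq (edf Y n ω) p = 0 := by
    intro n hn hA
    have hmem : (0 : ℝ) ∈ {x : ℝ | p ≤ edf Y n ω x} := by
      show p ≤ edf Y n ω 0
      rw [hedfYmid n 0 le_rfl one_pos]; exact hA
    have hlb : ∀ y ∈ {x : ℝ | p ≤ edf Y n ω x}, (0:ℝ) ≤ y := by
      intro y hy
      by_contra hneg
      have := hedfYneg n y (not_le.1 hneg)
      rw [Set.mem_setOf_eq, this] at hy; linarith
    exact le_antisymm (csInf_le ⟨0, hlb⟩ hmem) (le_csInf ⟨0, hmem⟩ hlb)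
  have c3 : ∀ n, 1 ≤ n → (k n : ℝ) / n < p → lq (edf Y n ω) p = 1 := by
    intro n hn hB
    have hmem : (1 : ℝ) ∈ {x : ℝ | p ≤ edf Y n ω x} := by
      show p ≤ edf Y n ω 1
      rw [hedfY1 n hn 1 le_rfl]; linarith
    have hlb : ∀ y ∈ {x : ℝ | p ≤ edf Y n ω x}, (1:ℝ) ≤ y := by
      intro y hy
      by_contra hneg
      rw [Set.mem_setOf_eq] at hy
      rcases lt_or_ge y 0 with h | h
      · rw [hedfYneg n y h] at hy; linarith
      · rw [hedfYmid n y h (not_le.1 hneg)] at hy; linarith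
    exact le_antisymm (csInf_le ⟨1, hlb⟩ hmem) (le_csInf ⟨1, hmem⟩ hlb)
  have hnpos : ∀ n : ℕ, 1 ≤ n → (0:ℝ) < n := fun n hn => Nat.cast_pos.2 hn
  have c4 : ∀ n, 1 ≤ n → p ≤ (k n : ℝ) / n → lq (edf X n ω) p ≤ l := by
    intro n hn hA
    have hmem : l ∈ {x : ℝ | p ≤ edf X n ω x} := by
      show p ≤ edf X n ω l
      rw [edf]; exact hA
    have hne : ((Finset.range n).image (fun i => X i ω)).Nonempty :=
      (Finset.nonempty_range_iff.2 (Nat.one_le_iff_ne_zero.1 hn)).image _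
    set m := ((Finset.range n).image (fun i => X i ω)).min' hne with hm
    refine csInf_le ⟨m, fun y hy => ?_⟩ hmem
    rw [Set.mem_setOf_eq, edf] at hy
    have hcard : 0 < ((Finset.range n).filter (fun i => X i ω ≤ y)).card := by
      by_contra hc
      have hc0 : ((Finset.range n).filter (fun i => X i ω ≤ y)).card = 0 :=
        Nat.eq_zero_of_not_pos hc
      rw [hc0] at hy
      simp at hy
      linarith
    obtain ⟨i, hi⟩ := Finset.card_pos.1 hcard
    rw [Finset.mem_filter] at hi
    calc m ≤ X i ω := Finset.min'_le _ _ (Finset.mem_image_of_mem _ hi.1)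
    _ ≤ y := hi.2
  have c5 : ∀ n, 1 ≤ n → (k n : ℝ) / n < p → r ≤ lq (edf X n ω) p := by
    intro n hn hB
    have hne : ((Finset.range n).image (fun i => X i ω)).Nonempty :=
      (Finset.nonempty_range_iff.2 (Nat.one_le_iff_ne_zero.1 hn)).image _
    set M := ((Finset.range n).image (fun i => X i ω)).max' hne with hM
    have hmem : M ∈ {x : ℝ | p ≤ edf X n ω x} := by
      show p ≤ edf X n ω M
      have : (Finset.range n).filter (fun i => X i ω ≤ M) = Finset.range n := by
        apply Finset.filter_true_of_mem
        intro i hi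
        exact Finset.le_max' _ (X i ω) (Finset.mem_image_of_mem (fun j => X j ω) hi)
      rw [edf, this, Finset.card_range, div_self (hnpos n hn).ne']
      linarith
    refine le_csInf ⟨M, hmem⟩ (fun y hy => ?_)
    by_contra hry
    have hsub : (Finset.range n).filter (fun i => X i ω ≤ y)
        ⊆ (Finset.range n).filter (fun i => X i ω ≤ l) := by
      intro i hi
      rw [Finset.mem_filter] at hi ⊢
      refine ⟨hi.1, ?_⟩
      rcases havoid i with h | h
      · exact h
      · exact absurd (le_trans h hi.2) (by push_neg at hry ⊢; linarith)
    rw [Set.mem_setOf_eq, edf] at hy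
    have hcle : ((((Finset.range n).filter (fun i => X i ω ≤ y)).card : ℝ)) ≤ (k n : ℝ) := by
      exact_mod_cast Finset.card_le_card hsub
    have : ((((Finset.range n).filter (fun i => X i ω ≤ y)).card : ℝ)) / n ≤ (k n : ℝ) / n := by
      gcongr
    linarith
  rintro ⟨L, hL⟩
  have hfA : ∃ᶠ n in atTop, p ≤ (k n : ℝ) / n := by
    by_contra hA
    rw [not_frequently] at hA
    refine hdiv ⟨1, ?_⟩
    refine Tendsto.congr' ?_ tendsto_const_nhds
    filter_upwards [hA, eventually_ge_atTop 1] with n h1 h2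
    exact (c3 n h2 (not_le.1 h1)).symm
  have hfB : ∃ᶠ n in atTop, (k n : ℝ) / n < p := by
    by_contra hB
    rw [not_frequently] at hB
    refine hdiv ⟨0, ?_⟩
    refine Tendsto.congr' ?_ tendsto_const_nhds
    filter_upwards [hB, eventually_ge_atTop 1] with n h1 h2
    exact (c2 n h2 (not_lt.1 h1)).symm
  have hLl : L ≤ l := by
    refine isClosed_Iic.mem_of_frequently_of_tendsto ?_ hL
    refine (hfA.and_eventually (eventually_ge_atTop 1)).mono ?_
    rintro n ⟨h1, h2⟩
    exact c4 n h2 h1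
  have hLr : r ≤ L := by
    refine isClosed_Ici.mem_of_frequently_of_tendsto ?_ hL
    refine (hfB.and_eventually (eventually_ge_atTop 1)).mono ?_
    rintro n ⟨h1, h2⟩
    exact c5 n h2 h1
  linarith

/-- The indicator variables `Y i = 1` if `X i ≥ rq F_X p`, `Y i = 0` if
`X i ≤ lq F_X p` form an i.i.d. sequence with `P(Y i = 0) = p` and
`P(Y i = 1) = 1 - p`; moreover, almost sure divergence of the left sample
quantiles of the `Y` sample implies almost sure divergence of the left sample
quantiles of the `X` sample. -/
theorem indicator_reduction_for_divergence
    {Ω : Type*} [MeasurableSpace Ω] (μ : Measure Ω) [IsProbabilityMeasure μ]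
    (X : ℕ → Ω → ℝ) (hmeas : ∀ i, Measurable (X i))
    (hindep : iIndepFun X μ)
    (hident : ∀ i, IdentDistrib (X i) (X 0) μ μ)
    (FX : ℝ → ℝ) (hFX : ∀ x, FX x = (μ {ω | X 0 ω ≤ x}).toReal)
    (p : ℝ) (hp : p ∈ Set.Ioo (0 : ℝ) 1) (hlt : lq FX p < rq FX p)
    (Y : ℕ → Ω → ℝ)
    (hY : ∀ i ω, Y i ω = if X i ω ≤ lq FX p then 0 else 1) :
    iIndepFun Y μ ∧
    (∀ i, IdentDistrib (Y i) (Y 0) μ μ) ∧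
    (∀ i, μ {ω | Y i ω = 0} = ENNReal.ofReal p) ∧
    (∀ i, μ {ω | Y i ω = 1} = ENNReal.ofReal (1 - p)) ∧
    ((∀ᵐ ω ∂μ, ¬ ∃ L : ℝ, Tendsto (fun n => lq (edf Y n ω) p) atTop (nhds L)) →
      (∀ᵐ ω ∂μ, ¬ ∃ L : ℝ,
        Tendsto (fun n => lq (edf X n ω) p) atTop (nhds L))) := by
  set ν : Measure ℝ := μ.map (X 0) with hν
  have hνprob : IsProbabilityMeasure ν := Measure.isProbabilityMeasure_map (hmeas 0).aemeasurable
  have hFXcdf : FX = cdf ν := by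
    funext x
    rw [hFX x, cdf_eq_real, measureReal_def, hν, Measure.map_apply (hmeas 0) measurableSet_Iic]
    rfl
  have hmono : Monotone FX := hFXcdf ▸ (cdf ν).mono
  have hrc : ∀ x, ContinuousWithinAt FX (Set.Ici x) x := hFXcdf ▸ (cdf ν).right_continuous
  have h0 : Tendsto FX atBot (nhds 0) := hFXcdf ▸ tendsto_cdf_atBot ν
  have h1 : Tendsto FX atTop (nhds 1) := hFXcdf ▸ tendsto_cdf_atTop ν
  set l := lq FX p with hl
  set r := rq FX p with hr
  have hFl : FX l = p := FX_at_lq hmono hrc h0 h1 hp hlt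
  -- measures of Iic between l and r
  have hIic : ∀ x, l ≤ x → x < r → ν (Set.Iic x) = ENNReal.ofReal p := by
    intro x hlx hxr
    have ha : FX x ≤ p := F_le_of_lt_rq hmono h0 hp.1 hxr
    have hb : p ≤ FX x := hFl ▸ hmono hlx
    have : (ν (Set.Iic x)).toReal = p := by
      rw [hFXcdf] at ha hb
      rw [← measureReal_def, ← cdf_eq_real]; linarith
    rw [← this, ENNReal.ofReal_toReal (measure_ne_top ν _)]
  have hIicl : ν (Set.Iic l) = ENNReal.ofReal p := hIic l le_rfl hlt
  -- the mapped measure of each X i on Iic l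
  have hXil : ∀ i, μ {ω | X i ω ≤ l} = ENNReal.ofReal p := by
    intro i
    have : μ {ω | X i ω ≤ l} = μ {ω | X 0 ω ≤ l} := by
      have := (hident i).measure_mem_eq (measurableSet_Iic (a := l))
      simpa [Set.preimage, Set.mem_Iic] using this
    rw [this, ← hIicl, hν, Measure.map_apply (hmeas 0) measurableSet_Iic]
    rfl
  -- the indicator function
  set g : ℝ → ℝ := fun x => if x ≤ l then 0 else 1 with hg
  have hgmeas : Measurable g := by
    apply Measurable.ite (measurableSet_Iic (a := l)) <;> exact measurable_const
  have hYg : Y = fun i => g ∘ X i := by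
    funext i ω
    exact hY i ω
  refine ⟨?_, ?_, ?_, ?_, ?_⟩
  · rw [hYg]
    exact hindep.comp (fun _ => g) (fun _ => hgmeas)
  · intro i
    rw [hYg]
    exact (hident i).comp hgmeas
  · intro i
    have hset : {ω | Y i ω = 0} = {ω | X i ω ≤ l} := by
      ext ω
      rw [Set.mem_setOf_eq, Set.mem_setOf_eq, hY i ω]
      split <;> simp_all
    rw [hset, hXil i]
  · intro i
    have hset : {ω | Y i ω = 1} = {ω | X i ω ≤ l}ᶜ := by
      ext ω
      rw [Set.mem_setOf_eq, Set.mem_compl_iff, Set.mem_setOf_eq, hY i ω]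
      split <;> simp_all
    have hms : MeasurableSet {ω | X i ω ≤ l} := hmeas i measurableSet_Iic
    rw [hset, prob_compl_eq_one_sub hms, hXil i,
      ENNReal.ofReal_sub 1 hp.1.le, ENNReal.ofReal_one]
  · intro hdivY
    -- a.s. no X i lands in (l, r)
    have hIoc : ∀ x, x < r → ν (Set.Ioc l x) = 0 := by
      intro x hxr
      rcases le_or_gt x l with h | h
      · rw [Set.Ioc_eq_empty (fun hc => absurd h (not_le.2 hc)), measure_empty]
      · rw [← Set.Iic_sdiff_Iic, measure_diff (Set.Iic_subset_Iic.2 h.le)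
          measurableSet_Iic.nullMeasurableSet (measure_ne_top ν _),
          hIic x h.le hxr, hIicl, tsub_self]
    have hIoo : ν (Set.Ioo l r) = 0 := by
      have hsub : Set.Ioo l r ⊆ ⋃ n : ℕ, Set.Ioc l (r - (r - l) / (n + 1)) := by
        intro y hy
        obtain ⟨n, hn⟩ := exists_nat_gt ((r - l) / (r - y))
        refine Set.mem_iUnion.2 ⟨n, hy.1, ?_⟩
        have hry : 0 < r - y := by linarith [hy.2]
        have hrl : 0 < r - l := by linarith [hlt]
        rw [div_lt_iff₀ hry] at hn
        have hn1 : r - l < (r - y) * (n + 1) := lt_of_lt_of_le hn (by nlinarith)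
        have : (r - l) / (n + 1) < r - y := by
          rw [div_lt_iff₀ (by positivity)]; linarith
        linarith
      refine le_antisymm (le_trans (measure_mono hsub)
        (le_of_eq (measure_iUnion_null fun n => hIoc _ ?_))) (zero_le)
      have hrl : (0:ℝ) < r - l := by linarith [hlt]
      have : 0 < (r - l) / ((n : ℝ) + 1) := div_pos hrl (by positivity)
      linarith
    have havoid : ∀ᵐ ω ∂μ, ∀ i, X i ω ≤ l ∨ r ≤ X i ω := by
      have hnull : μ (⋃ i, X i ⁻¹' Set.Ioo l r) = 0 := by
        refine measure_iUnion_null fun i => ?_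
        have : μ (X i ⁻¹' Set.Ioo l r) = μ (X 0 ⁻¹' Set.Ioo l r) :=
          (hident i).measure_mem_eq measurableSet_Ioo
        rw [this, ← Measure.map_apply (hmeas 0) measurableSet_Ioo, ← hν, hIoo]
      rw [ae_iff]
      refine measure_mono_null ?_ hnull
      intro ω hω
      push_neg at hω
      obtain ⟨i, hi1, hi2⟩ := hω
      exact Set.mem_iUnion.2 ⟨i, hi1, hi2⟩
    filter_upwards [havoid, hdivY] with ω h1 h2
    exact det_lemma X Y ω l r p hp.1 hp.2 hlt (fun i => hY i ω) h1 h2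
end
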